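/- Let e_1,…,e_N be the standard basis of ℝ^N and let V ⊆ ℝ^N be a linear subspace of dimension D such that e_i ∉ V^⊥ for all i. Then for any unit vectors v_1,…,v_N ∈ V, Σ_{i=1}^N (v_i·e_i)² ≤ D, with equality if and only if for each i the vector v_i is parallel to the orthogonal projection of e_i onto V. -/

import Mathlib

open scoped BigOperators RealInnerProductSpace

/-- Let `e_1, …, e_N` be the standard basis of `ℝ^N` and `V` a subspace of
dimension `D` with `e i ∉ Vᗮ` for all `i`. For any unit vectors `v i ∈ V`,
`∑ i, ⟪v i, e i⟫² ≤ D`, with equality iff each `v i` is parallel to the orthogonal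
projection of `e i` onto `V`. -/
theorem sum_inner_sq_le_dim_and_eq_iff_parallel
    {N D : ℕ} (V : Submodule ℝ (EuclideanSpace ℝ (Fin N)))
    (hV : Module.finrank ℝ V = D)
    (e : Fin N → EuclideanSpace ℝ (Fin N))
    (he : ∀ i, e i = EuclideanSpace.single i (1 : ℝ))
    (hperp : ∀ i, e i ∉ Vᗮ)
    (v : Fin N → EuclideanSpace ℝ (Fin N))
    (hvV : ∀ i, v i ∈ V) (hv : ∀ i, ‖v i‖ = 1) :
    (∑ i, ⟪v i, e i⟫ ^ 2 ≤ (D : ℝ)) ∧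
      ((∑ i, ⟪v i, e i⟫ ^ 2 = (D : ℝ)) ↔
        ∀ i, ∃ c : ℝ, v i = c • (V.orthogonalProjection (e i) : EuclideanSpace ℝ (Fin N))) := by
  set p : Fin N → EuclideanSpace ℝ (Fin N) :=
    fun i => (V.orthogonalProjection (e i) : EuclideanSpace ℝ (Fin N)) with hp
  have hpV : ∀ i, p i ∈ V := fun i => (V.orthogonalProjection (e i)).2
  have hp0 : ∀ i, p i ≠ 0 := by
    intro i h
    exact hperp i (Submodule.orthogonalProjectionOnto_eq_zero_iff.mp (Submodule.coe_eq_zero.mp h))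
  -- inner with e i equals inner with p i, for vectors in V
  have hinner : ∀ w, w ∈ V → ∀ i, ⟪w, e i⟫ = ⟪w, p i⟫ := by
    intro w hw i
    have := Submodule.inner_orthogonalProjectionOnto_eq_of_mem_left (K := V) ⟨w, hw⟩ (e i)
    rw [Submodule.coe_inner] at this
    exact this.symm
  -- sum of ‖p i‖^2 = D
  have hsum : ∑ i, ‖p i‖ ^ 2 = (D : ℝ) := by
    classical
    let b := stdOrthonormalBasis ℝ V
    have hcoord : ∀ i, ‖p i‖ ^ 2 = ∑ j, ((b j : EuclideanSpace ℝ (Fin N)) i) ^ 2 := by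
      intro i
      have h1 : ‖p i‖ ^ 2 = ⟪p i, e i⟫ := by
        rw [hinner (p i) (hpV i) i, real_inner_self_eq_norm_sq]
      have h2 : V.orthogonalProjection (e i) =
          ∑ j, ⟪(b j : EuclideanSpace ℝ (Fin N)), e i⟫ • b j :=
        b.orthogonalProjectionOnto_apply_eq_sum (e i)
      have h3 : p i = ∑ j, ⟪(b j : EuclideanSpace ℝ (Fin N)), e i⟫ •
          (b j : EuclideanSpace ℝ (Fin N)) := by
        show ((V.orthogonalProjection (e i) : V) : EuclideanSpace ℝ (Fin N)) = _
        rw [h2]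
        push_cast
        rfl
      rw [h1, h3]
      rw [sum_inner]
      refine Finset.sum_congr rfl fun j _ => ?_
      rw [real_inner_smul_left]
      have hb : ⟪(b j : EuclideanSpace ℝ (Fin N)), e i⟫ = (b j : EuclideanSpace ℝ (Fin N)) i := by
        rw [he, EuclideanSpace.inner_single_right]
        simp
      rw [hb]
      ring
    rw [← hV]
    calc ∑ i, ‖p i‖ ^ 2 = ∑ i, ∑ j, ((b j : EuclideanSpace ℝ (Fin N)) i) ^ 2 :=
          Finset.sum_congr rfl fun i _ => hcoord i
      _ = ∑ j, ∑ i, ((b j : EuclideanSpace ℝ (Fin N)) i) ^ 2 := Finset.sum_comm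
      _ = ∑ j : Fin (Module.finrank ℝ V), (1 : ℝ) := by
          refine Finset.sum_congr rfl fun j _ => ?_
          have : ∑ i, ((b j : EuclideanSpace ℝ (Fin N)) i) ^ 2 =
              ⟪(b j : EuclideanSpace ℝ (Fin N)), (b j : EuclideanSpace ℝ (Fin N))⟫ := by
            rw [PiLp.inner_apply]
            refine Finset.sum_congr rfl fun i _ => ?_
            simp [sq]
          rw [this, real_inner_self_eq_norm_sq]
          have := b.orthonormal.1 j
          rw [Submodule.norm_coe] at *
          simp [this]
      _ = Module.finrank ℝ V := by simp
  -- pointwise inequality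
  have hle : ∀ i, ⟪v i, e i⟫ ^ 2 ≤ ‖p i‖ ^ 2 := by
    intro i
    rw [hinner (v i) (hvV i) i]
    have h := abs_real_inner_le_norm (v i) (p i)
    rw [hv i, one_mul] at h
    calc ⟪v i, p i⟫ ^ 2 = |⟪v i, p i⟫| ^ 2 := (sq_abs _).symm
      _ ≤ ‖p i‖ ^ 2 := by
          exact pow_le_pow_left₀ (abs_nonneg _) h 2
  have hle' : ∑ i, ⟪v i, e i⟫ ^ 2 ≤ (D : ℝ) := by
    rw [← hsum]
    exact Finset.sum_le_sum fun i _ => hle i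
  refine ⟨hle', ?_, ?_⟩
  · intro heq
    have heach : ∀ i ∈ Finset.univ, ⟪v i, e i⟫ ^ 2 = ‖p i‖ ^ 2 :=
      (Finset.sum_eq_sum_iff_of_le fun i _ => hle i).mp (by rw [heq, hsum])
    intro i
    have hi := heach i (Finset.mem_univ i)
    rw [hinner (v i) (hvV i) i] at hi
    have habs : |⟪p i, v i⟫ / (‖p i‖ * ‖v i‖)| = 1 := by
      have hpn : ‖p i‖ ≠ 0 := norm_ne_zero_iff.mpr (hp0 i)
      rw [hv i, mul_one, abs_div, abs_of_nonneg (norm_nonneg _), div_eq_one_iff_eq hpn]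
      have : |⟪p i, v i⟫| ^ 2 = ‖p i‖ ^ 2 := by
        rw [sq_abs, real_inner_comm]; exact hi
      exact (sq_eq_sq₀ (abs_nonneg _) (norm_nonneg _)).mp this
    obtain ⟨-, r, -, hr⟩ := (abs_real_inner_div_norm_mul_norm_eq_one_iff (p i) (v i)).mp habs
    exact ⟨r, hr⟩
  · intro hpar
    rw [← hsum]
    refine Finset.sum_congr rfl fun i _ => ?_
    obtain ⟨c, hc⟩ := hpar i
    have hnc : |c| * ‖p i‖ = 1 := by
      rw [← Real.norm_eq_abs, ← norm_smul, show c • p i = v i from hc.symm, hv i]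
    have hip : ⟪v i, e i⟫ = c * ‖p i‖ ^ 2 := by
      rw [hinner (v i) (hvV i) i, hc, real_inner_smul_left, real_inner_self_eq_norm_sq]
    rw [hip]
    have h1 : c ^ 2 * ‖p i‖ ^ 2 = 1 := by
      have := congrArg (· ^ 2) hnc
      simpa [mul_pow, sq_abs] using this
    nlinarith
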